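/- For every finite set M, entitlements α₁, α₂ ∈ (0,1) with α₁ + α₂ = 1, a monotone normalized XOS valuation v₁ : 2^M → ℝ≥0, and a monotone normalized valuation v₂ : 2^M → ℝ≥0, there exists a partition (A₁,A₂) of M such that v₁(A₁) ≥ α₁·v₁(M) and v₂(A₂) ≥ APS_{α₂}(v₂). -/

import Mathlib

/-- A valuation `v : 2^M → ℝ` is XOS if it is the pointwise maximum of finitely many
(at least one) nonnegative additive functions. -/
def IsXOS {M : Type*} [Fintype M] (v : Finset M → ℝ) : Prop :=
  ∃ (l : ℕ) (a : Fin (l + 1) → M → ℝ),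
    (∀ k j, 0 ≤ a k j) ∧
    ∀ T : Finset M, v T = Finset.univ.sup' Finset.univ_nonempty fun k => ∑ j ∈ T, a k j

/-- The AnyPrice Share of a valuation `v` with entitlement `α`:
`APS_α(v) = inf_{p price vector} max {v T : T ⊆ M, p(T) ≤ α}`, where a price vector is
a nonnegative `p : M → ℝ` summing to `1`. -/
noncomputable def aps {M : Type*} [Fintype M] (α : ℝ) (v : Finset M → ℝ) : ℝ :=
  sInf {x : ℝ | ∃ p : M → ℝ, (∀ j, 0 ≤ p j) ∧ (∑ j, p j) = 1 ∧
    x = sSup {y : ℝ | ∃ T : Finset M, (∑ j ∈ T, p j) ≤ α ∧ y = v T}}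

/-- For any price vector `p`, there is a bundle `T` affordable at budget `α2` whose value
is at least the AnyPrice share. -/
lemma exists_affordable_bundle {M : Type*} [Fintype M] [DecidableEq M]
    (α2 : ℝ) (hα2 : 0 < α2) (v2 : Finset M → ℝ)
    (p : M → ℝ) (hp0 : ∀ j, 0 ≤ p j) (hp1 : (∑ j, p j) = 1) :
    ∃ T : Finset M, (∑ j ∈ T, p j) ≤ α2 ∧ aps α2 v2 ≤ v2 T := by
  classical
  obtain ⟨T, hT, hTmax⟩ := Finset.exists_max_image
    ((Finset.univ : Finset (Finset M)).filter fun T => (∑ j ∈ T, p j) ≤ α2) v2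
    ⟨∅, by simp [hα2.le]⟩
  refine ⟨T, (Finset.mem_filter.mp hT).2, ?_⟩
  have hbdd : BddBelow {x : ℝ | ∃ q : M → ℝ, (∀ j, 0 ≤ q j) ∧ (∑ j, q j) = 1 ∧
      x = sSup {y : ℝ | ∃ T : Finset M, (∑ j ∈ T, q j) ≤ α2 ∧ y = v2 T}} := by
    refine ⟨v2 ∅, ?_⟩
    rintro x ⟨q, hq0, hq1, rfl⟩
    have hfin : {y : ℝ | ∃ T : Finset M, (∑ j ∈ T, q j) ≤ α2 ∧ y = v2 T}.Finite :=
      (Set.finite_range v2).subset (by rintro y ⟨U, _, rfl⟩; exact ⟨U, rfl⟩)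
    exact le_csSup hfin.bddAbove ⟨∅, by simp [hα2.le]⟩
  have h2 : aps α2 v2 ≤ sSup {y : ℝ | ∃ T : Finset M, (∑ j ∈ T, p j) ≤ α2 ∧ y = v2 T} :=
    csInf_le hbdd ⟨p, hp0, hp1, rfl⟩
  have h1 : sSup {y : ℝ | ∃ T : Finset M, (∑ j ∈ T, p j) ≤ α2 ∧ y = v2 T} ≤ v2 T := by
    refine csSup_le ⟨v2 ∅, ∅, by simp [hα2.le]⟩ ?_
    rintro y ⟨U, hU, rfl⟩
    exact hTmax U (Finset.mem_filter.mpr ⟨Finset.mem_univ _, hU⟩)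
  exact h2.trans h1

/-- For every finite set `M`, entitlements `α₁, α₂ ∈ (0,1)` with `α₁ + α₂ = 1`, a
monotone normalized (nonnegative) XOS valuation `v₁` and a monotone normalized
(nonnegative) valuation `v₂`, there exists a partition `(A₁, A₂)` of `M`
(here `A₂ = A₁ᶜ`) with `v₁(A₁) ≥ α₁·v₁(M)` and `v₂(A₂) ≥ APS_{α₂}(v₂)`. -/
theorem exists_PROP_APS_partition {M : Type*} [Fintype M] [DecidableEq M]
    (α1 α2 : ℝ) (hα1 : 0 < α1 ∧ α1 < 1) (hα2 : 0 < α2 ∧ α2 < 1) (hsum : α1 + α2 = 1)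
    (v1 v2 : Finset M → ℝ)
    (h1mono : ∀ T T' : Finset M, T ⊆ T' → v1 T ≤ v1 T')
    (h1norm : v1 ∅ = 0)
    (h1nonneg : ∀ T : Finset M, 0 ≤ v1 T)
    (h1xos : IsXOS v1)
    (h2mono : ∀ T T' : Finset M, T ⊆ T' → v2 T ≤ v2 T')
    (h2norm : v2 ∅ = 0)
    (h2nonneg : ∀ T : Finset M, 0 ≤ v2 T) :
    ∃ A1 : Finset M,
      α1 * v1 (Finset.univ : Finset M) ≤ v1 A1 ∧
      aps α2 v2 ≤ v2 A1ᶜ := by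
  classical
  obtain ⟨l, a, hnn, hrep⟩ := h1xos
  by_cases hM : Nonempty M
  · obtain ⟨k, -, hk⟩ := Finset.exists_mem_eq_sup' (s := (Finset.univ : Finset (Fin (l + 1))))
      (H := Finset.univ_nonempty) (fun k => ∑ j ∈ (Finset.univ : Finset M), a k j)
    have hvu : v1 Finset.univ = ∑ j, a k j := by rw [hrep]; exact hk
    have hle : ∀ T : Finset M, (∑ j ∈ T, a k j) ≤ v1 T := fun T => by
      rw [hrep]; exact Finset.le_sup' (fun k => ∑ j ∈ T, a k j) (Finset.mem_univ k)
    set s := ∑ j, a k j with hsdef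
    by_cases hs : s = 0
    · have hn : (0 : ℝ) < (Fintype.card M : ℝ) := by
        exact_mod_cast Fintype.card_pos
      obtain ⟨T, hT, hTaps⟩ := exists_affordable_bundle α2 hα2.1 v2
        (fun _ => (Fintype.card M : ℝ)⁻¹) (fun j => by positivity)
        (by rw [Finset.sum_const, Finset.card_univ, nsmul_eq_mul, mul_inv_cancel₀ hn.ne'])
      refine ⟨Tᶜ, ?_, by rwa [compl_compl]⟩
      have : α1 * v1 Finset.univ = 0 := by rw [hvu, hs, mul_zero]
      rw [this]; exact h1nonneg _
    · have hs' : 0 < s := lt_of_le_of_ne (Finset.sum_nonneg fun j _ => hnn k j) (Ne.symm hs)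
      obtain ⟨T, hT, hTaps⟩ := exists_affordable_bundle α2 hα2.1 v2
        (fun j => a k j / s) (fun j => div_nonneg (hnn k j) hs'.le)
        (by rw [← Finset.sum_div]; exact div_self hs)
      refine ⟨Tᶜ, ?_, by rwa [compl_compl]⟩
      have hsplit : (∑ j ∈ T, a k j / s) + (∑ j ∈ Tᶜ, a k j / s) = 1 := by
        rw [Finset.sum_add_sum_compl, ← Finset.sum_div, div_self hs]
      have hα1le : α1 ≤ ∑ j ∈ Tᶜ, a k j / s := by linarith
      have hdiv : (∑ j ∈ Tᶜ, a k j / s) = (∑ j ∈ Tᶜ, a k j) / s := by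
        rw [Finset.sum_div]
      calc α1 * v1 Finset.univ = α1 * s := by rw [hvu]
        _ ≤ ∑ j ∈ Tᶜ, a k j := by
            rw [hdiv] at hα1le
            have := (le_div_iff₀ hs').mp hα1le
            linarith
        _ ≤ v1 Tᶜ := hle Tᶜ
  · haveI : IsEmpty M := not_nonempty_iff.mp hM
    refine ⟨∅, ?_, ?_⟩
    · have huniv : (Finset.univ : Finset M) = ∅ := Finset.univ_eq_empty
      rw [huniv, h1norm, mul_zero]
    · have hempty : {x : ℝ | ∃ p : M → ℝ, (∀ j, 0 ≤ p j) ∧ (∑ j, p j) = 1 ∧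
          x = sSup {y : ℝ | ∃ T : Finset M, (∑ j ∈ T, p j) ≤ α2 ∧ y = v2 T}} = ∅ := by
        ext x
        simp only [Set.mem_setOf_eq, Set.mem_empty_iff_false, iff_false]
        rintro ⟨p, _, hp1, _⟩
        rw [Finset.univ_eq_empty, Finset.sum_empty] at hp1
        norm_num at hp1
      rw [aps, hempty, Real.sInf_empty]
      exact h2nonneg _
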